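/- For all n ≥ 1, ∑_{k=0}^n (-1)^k q^{C(k,2)} [n choose k]_q F_{2n-k}(s,q) = 0, where F denotes the q-Fibonacci polynomials. -/

import Mathlib

noncomputable section

/-- The field ℚ(q) of rational functions, with q an indeterminate. -/
abbrev K : Type := RatFunc ℚ

/-- The indeterminate q. -/
def q : K := RatFunc.X

/-- The q-integer [n]_q. -/
def qint (n : ℕ) : K := ∑ i ∈ Finset.range n, q ^ i

/-- The q-factorial. -/
def qfact : ℕ → K
  | 0 => 1
  | n + 1 => qint (n + 1) * qfact n

/-- The Gaussian binomial coefficient. -/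
def qbinom (n k : ℕ) : K := qfact n / (qfact k * qfact (n - k))

/-- The (Carlitz) q-Fibonacci polynomials: F_0 = 0, F_1 = 1,
F_n(s,q) = F_{n-1}(s,q) + q^{n-3} s F_{n-2}(s,q). -/
def qFib : ℕ → Polynomial K
  | 0 => 0
  | 1 => 1
  | n + 2 => qFib (n + 1) + Polynomial.C (q ^ ((n : ℤ) - 1)) * Polynomial.X * qFib n

/-- The q-Fibonacci polynomials with q replaced by 1/q. -/
def qFibInv : ℕ → Polynomial K
  | 0 => 0
  | 1 => 1
  | n + 2 => qFibInv (n + 1) + Polynomial.C (q ^ (1 - (n : ℤ))) * Polynomial.X * qFibInv n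

lemma q_ne_zero : q ≠ 0 := RatFunc.X_ne_zero

lemma qint_ne_zero {n : ℕ} (h : 1 ≤ n) : qint n ≠ 0 := by
  unfold qint q
  rw [show (RatFunc.X : K) = algebraMap (Polynomial ℚ) K Polynomial.X from rfl]
  simp_rw [← map_pow, ← map_sum]
  intro hc
  have h2 := (map_eq_zero_iff _ (RatFunc.algebraMap_injective ℚ)).mp hc
  have h3 := congrArg (Polynomial.eval 1) h2
  simp at h3
  omega

lemma qint_add (a b : ℕ) : qint (a + b) = qint a + q ^ a * qint b := by
  unfold qint
  rw [Finset.sum_range_add, Finset.mul_sum]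
  exact congrArg _ (Finset.sum_congr rfl fun i _ => by rw [pow_add])

lemma qfact_ne_zero (n : ℕ) : qfact n ≠ 0 := by
  induction n with
  | zero => simp [qfact]
  | succ n ih => exact mul_ne_zero (qint_ne_zero (Nat.succ_le_succ n.zero_le)) ih

lemma qfact_succ (n : ℕ) : qfact (n + 1) = qint (n + 1) * qfact n := rfl

lemma qbinom_zero (n : ℕ) : qbinom n 0 = 1 := by
  unfold qbinom; simp [qfact]; exact qfact_ne_zero n

lemma qbinom_self (n : ℕ) : qbinom n n = 1 := by
  unfold qbinom; simp [qfact]; exact qfact_ne_zero n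

lemma pascal_core (k m : ℕ) :
    qbinom (k + m + 2) (k + 1) = qbinom (k + m + 1) k + q ^ (k + 1) * qbinom (k + m + 1) (k + 1) := by
  unfold qbinom
  have h1 : k + m + 2 - (k + 1) = m + 1 := by omega
  have h2 : k + m + 1 - k = m + 1 := by omega
  have h3 : k + m + 1 - (k + 1) = m := by omega
  rw [h1, h2, h3]
  have hsplit : qint (k + m + 2) = qint (k + 1) + q ^ (k + 1) * qint (m + 1) := by
    have := qint_add (k + 1) (m + 1)
    rw [show k + 1 + (m + 1) = k + m + 2 by omega] at this
    exact this
  rw [qfact_succ (k + m + 1), qfact_succ k, qfact_succ m, hsplit]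
  have hk := qfact_ne_zero k
  have hm := qfact_ne_zero m
  have hkm := qfact_ne_zero (k + m + 1)
  have hik := qint_ne_zero (Nat.succ_le_succ k.zero_le)
  have him := qint_ne_zero (Nat.succ_le_succ m.zero_le)
  field_simp

/-- truncated Gaussian binomial -/
def b (n k : ℕ) : K := if k ≤ n then qbinom n k else 0

lemma b_zero (n : ℕ) : b n 0 = 1 := by simp [b, qbinom_zero]

lemma b_gt (n k : ℕ) (h : n < k) : b n k = 0 := by simp [b, Nat.not_le.mpr h]

lemma b_pascal (n k : ℕ) : b (n + 1) (k + 1) = b n k + q ^ (k + 1) * b n (k + 1) := by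
  rcases lt_trichotomy k n with h | h | h
  · obtain ⟨m, rfl⟩ : ∃ m, n = k + m + 1 := ⟨n - k - 1, by omega⟩
    have h1 : k + 1 ≤ k + m + 1 + 1 := by omega
    have h2 : k ≤ k + m + 1 := by omega
    have h3 : k + 1 ≤ k + m + 1 := by omega
    simp only [b, if_pos h1, if_pos h2, if_pos h3]
    exact pascal_core k m
  · subst h
    simp only [b, if_pos (le_refl (k + 1)), if_pos (le_refl k), if_neg (by omega : ¬ k + 1 ≤ k)]
    rw [qbinom_self, qbinom_self]; ring
  · simp only [b, if_neg (by omega : ¬ k + 1 ≤ n + 1), if_neg (by omega : ¬ k ≤ n),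
      if_neg (by omega : ¬ k + 1 ≤ n)]
    ring

/-- the main alternating sum -/
def A (n : ℕ) : Polynomial K :=
  ∑ k ∈ Finset.range (n + 1),
    Polynomial.C ((-1 : K) ^ k * q ^ (k.choose 2) * b n k) * qFib (2 * n - k)

lemma qFib_step (m : ℕ) (hm : 1 ≤ m) :
    qFib (m + 2) - qFib (m + 1) = Polynomial.C (q ^ (m - 1)) * Polynomial.X * qFib m := by
  rw [show qFib (m + 2) = qFib (m + 1) + Polynomial.C (q ^ ((m : ℤ) - 1)) * Polynomial.X * qFib m
    from rfl]
  rw [show ((m : ℤ) - 1) = ((m - 1 : ℕ) : ℤ) by omega, zpow_natCast]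
  ring

lemma A_step (n : ℕ) (hn : 1 ≤ n) :
    A (n + 1) = Polynomial.C (q ^ (2 * n - 1)) * Polynomial.X * A n := by
  classical
  set P : ℕ → Polynomial K := fun j =>
    Polynomial.C ((-1 : K) ^ (j + 1) * q ^ (j.choose 2 + j) * b n j) * qFib (2 * n + 1 - j) with hP
  set h : ℕ → Polynomial K := fun k =>
    Polynomial.C ((-1 : K) ^ k * q ^ (k.choose 2) * q ^ k * b n k) * qFib (2 * n + 2 - k) with hh
  have key1 : ∀ j, Polynomial.C ((-1 : K) ^ (j + 1) * q ^ ((j+1).choose 2) * b (n+1) (j+1)) *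
      qFib (2 * (n + 1) - (j + 1)) = P j + h (j + 1) := by
    intro j
    have hc : (j + 1).choose 2 = j.choose 2 + j := by
      simp [Nat.choose_succ_succ, Nat.choose_one_right]; omega
    have hs : 2 * (n + 1) - (j + 1) = 2 * n + 1 - j := by omega
    have hs2 : 2 * n + 2 - (j + 1) = 2 * n + 1 - j := by omega
    rw [hs, b_pascal, hc]
    simp only [hP, hh, hs2, hc]
    rw [show ((-1 : K) ^ (j + 1) * q ^ (j.choose 2 + j) * (b n j + q ^ (j + 1) * b n (j + 1)))
        = ((-1 : K) ^ (j + 1) * q ^ (j.choose 2 + j) * b n j)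
          + ((-1 : K) ^ (j + 1) * q ^ (j.choose 2 + j) * q ^ (j + 1) * b n (j + 1)) by ring,
      map_add, add_mul]
  have key2 : ∀ j ∈ Finset.range (n + 1), P j + h j =
      Polynomial.C (q ^ (2 * n - 1)) * Polynomial.X *
        (Polynomial.C ((-1 : K) ^ j * q ^ (j.choose 2) * b n j) * qFib (2 * n - j)) := by
    intro j hj
    have hjn : j ≤ n := Nat.lt_succ_iff.mp (Finset.mem_range.mp hj)
    obtain ⟨m, hm1, hm2⟩ : ∃ m, 2 * n - j = m ∧ 1 ≤ m := ⟨2 * n - j, rfl, by omega⟩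
    have e1 : 2 * n + 2 - j = m + 2 := by omega
    have e2 : 2 * n + 1 - j = m + 1 := by omega
    obtain ⟨e, he1, he2⟩ : ∃ e, m - 1 = e ∧ 2 * n - 1 = j + e := ⟨m - 1, rfl, by omega⟩
    have e3 : qFib (m + 2) = qFib (m + 1) + Polynomial.C (q ^ e) * Polynomial.X * qFib m := by
      have := qFib_step m hm2
      rw [he1] at this
      linear_combination this
    simp only [hP, hh, e1, e2, hm1, e3, he2]
    simp only [map_mul, map_pow, map_neg, map_one, pow_add]
    ring
  calc A (n + 1)
      = (∑ j ∈ Finset.range (n + 1),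
          Polynomial.C ((-1 : K) ^ (j + 1) * q ^ ((j+1).choose 2) * b (n+1) (j+1)) *
            qFib (2 * (n + 1) - (j + 1)))
        + Polynomial.C ((-1 : K) ^ 0 * q ^ (Nat.choose 0 2) * b (n+1) 0) *
            qFib (2 * (n + 1) - 0) := by
        rw [A, Finset.sum_range_succ']
    _ = (∑ j ∈ Finset.range (n + 1), (P j + h (j + 1))) + h 0 := by
        rw [Finset.sum_congr rfl fun j _ => key1 j]
        congr 1
        simp only [hh, b_zero, pow_zero, Nat.choose, mul_one, one_mul]
        norm_num
        rw [show 2 * (n + 1) = 2 * n + 2 by ring]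
    _ = (∑ j ∈ Finset.range (n + 1), P j) + ((∑ j ∈ Finset.range (n + 1), h (j + 1)) + h 0) := by
        rw [Finset.sum_add_distrib]; ring
    _ = (∑ j ∈ Finset.range (n + 1), P j) + ∑ k ∈ Finset.range (n + 2), h k := by
        rw [Finset.sum_range_succ' h (n + 1)]
    _ = (∑ j ∈ Finset.range (n + 1), P j) + ∑ k ∈ Finset.range (n + 1), h k := by
        rw [Finset.sum_range_succ h (n + 1)]
        have : h (n + 1) = 0 := by
          simp only [hh, b_gt n (n + 1) (Nat.lt_succ_self n), mul_zero, map_zero, zero_mul]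
        rw [this, add_zero]
    _ = ∑ j ∈ Finset.range (n + 1), (P j + h j) := by rw [Finset.sum_add_distrib]
    _ = ∑ j ∈ Finset.range (n + 1), Polynomial.C (q ^ (2 * n - 1)) * Polynomial.X *
          (Polynomial.C ((-1 : K) ^ j * q ^ (j.choose 2) * b n j) * qFib (2 * n - j)) :=
        Finset.sum_congr rfl key2
    _ = Polynomial.C (q ^ (2 * n - 1)) * Polynomial.X * A n := by
        rw [← Finset.mul_sum, A]

lemma A_eq_zero (n : ℕ) (hn : 1 ≤ n) : A n = 0 := by
  induction n with
  | zero => omega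
  | succ n ih =>
    rcases Nat.eq_or_lt_of_le hn with h | h
    · have : n = 0 := by omega
      subst this
      unfold A
      rw [Finset.sum_range_succ, Finset.sum_range_succ, Finset.sum_range_zero]
      have h2 : qFib 2 = (1 : Polynomial K) := by
        rw [show qFib 2 = qFib 1 + Polynomial.C (q ^ ((0 : ℤ) - 1)) * Polynomial.X * qFib 0
          from rfl]
        simp [qFib]
      norm_num [b_zero, b, qbinom_self, h2, qFib]
      rw [qbinom_zero]
      simp
    · have hn1 : 1 ≤ n := by omega
      rw [A_step n hn1, ih hn1, mul_zero]

theorem stmt16 (n : ℕ) (hn : 1 ≤ n) :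
    ∑ k ∈ Finset.range (n + 1),
      Polynomial.C ((-1 : K) ^ k * q ^ (k.choose 2) * qbinom n k) * qFib (2 * n - k) = 0 := by
  rw [← A_eq_zero n hn]
  unfold A
  refine Finset.sum_congr rfl fun k hk => ?_
  have hkn : k ≤ n := Nat.lt_succ_iff.mp (Finset.mem_range.mp hk)
  rw [show b n k = qbinom n k by simp [b, hkn]]

end
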